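/- Let 𝕄 = {M_1, …, M_k} be integer matrices of common row dimension d, with M_ℓ of column dimension c_ℓ and s = c_1 + … + c_k, and let A be an integer d×n target matrix. For a ∈ ℤ^d write C_a for the set of vectors x ∈ ℕ^s with [M_1 | … | M_k]·x = a. Suppose that for every a that is either a column of A or the zero vector there are given sets B_a ⊆ C_a and P ⊆ C_0 such that C_a = B_a + P^⊕ (every element of C_a is an element of B_a plus a finite sum of elements of P). If there exists an (A,𝕄)-multihistogram, then there exists an (A,𝕄)-multihistogram every column of which (read as a stacked vector in ℕ^s) belongs to B_0 ∪ B_{A(_,1)} ∪ … ∪ B_{A(_,n)} ∪ P. -/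

import Mathlib

/-- A nonnegative integer `r × c` matrix `H` is a histogram of degree `s` if `s > 0`,
every row of `H` sums to `s`, and for every `1 ≤ i < r` and `0 ≤ j < c` (here rendered
0-indexed) the sum of the first `j` entries of row `i` is at least the sum of the
first `j+1` entries of row `i+1`. -/
def IsHistogram {r c : ℕ} (H : Matrix (Fin r) (Fin c) ℤ) (s : ℕ) : Prop :=
  0 < s ∧
  (∀ i j, 0 ≤ H i j) ∧
  (∀ i, ∑ j, H i j = (s : ℤ)) ∧
  ∀ (i j : ℕ) (hi : i + 1 < r), j < c →
    ∑ l ∈ Finset.univ.filter (fun l : Fin c => (l : ℕ) < j + 1), H ⟨i + 1, hi⟩ l ≤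
      ∑ l ∈ Finset.univ.filter (fun l : Fin c => (l : ℕ) < j), H ⟨i, Nat.lt_of_succ_lt hi⟩ l

/-- `N` is a 0-extension of `M` if `N` is obtained from `M` by inserting additional zero
columns at arbitrary positions: there is a strictly monotone map of column indices along
which `N` agrees with `M`, all other columns of `N` being zero. -/
def IsZeroExt {d c c' : ℕ} (M : Matrix (Fin d) (Fin c) ℤ) (N : Matrix (Fin d) (Fin c') ℤ) :
    Prop :=
  ∃ f : Fin c → Fin c', StrictMono f ∧
    (∀ i j, N i (f j) = M i j) ∧
    (∀ i j', (∀ j, f j ≠ j') → N i j' = 0)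

/-- Let `M 0, …, M (k-1)` be integer matrices of common row dimension `d`, `M ℓ` of
column dimension `cdim ℓ`, and let `A` be an integer `d × n` target matrix. For
`a ∈ ℤ^d`, `C a` is the set of nonnegative integer vectors `x` (indexed by the disjoint
union of the column index sets, of total size `s = cdim 0 + … + cdim (k-1)`) with
`[M 0 | … | M (k-1)] * x = a`. Suppose for every `a` that is a column of `A` or zero we
are given `B a ⊆ C a` and `P ⊆ C 0` with `C a = B a + P^⊕` (`P^⊕` being the additive
closure of `P`, i.e. the set of finite sums of elements of `P`). If there exists an
`(A, M)`-multihistogram, then there exists an `(A, M)`-multihistogram every column of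
which (read as a stacked vector) belongs to `B 0 ∪ B (A _ 0) ∪ … ∪ B (A _ (n-1)) ∪ P`. -/
lemma histo_transfer {r c c' : ℕ} {H : Matrix (Fin r) (Fin c) ℤ} {s : ℕ}
    (hH : IsHistogram H s) (g : Fin c' → Fin c) (hg : Monotone g)
    (Y : Matrix (Fin r) (Fin c') ℤ) (hY0 : ∀ i t, 0 ≤ Y i t)
    (hfib : ∀ i j, ∑ t ∈ Finset.univ.filter (fun t => g t = j), Y i t = H i j) :
    IsHistogram Y s := by
  obtain ⟨hs, hpos, hrow, hstair⟩ := hH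
  refine ⟨hs, hY0, ?_, ?_⟩
  · intro i
    rw [← hrow i]
    rw [← Finset.sum_fiberwise Finset.univ g (fun t => Y i t)]
    exact Finset.sum_congr rfl fun j _ => hfib i j
  · intro i t hi ht
    -- bound the lower sum from below
    have key1 : ∀ (i' : Fin r) (jn : ℕ),
        ∑ l ∈ Finset.univ.filter (fun l : Fin c' => ((g l : ℕ)) < jn), Y i' l
          = ∑ j' ∈ Finset.univ.filter (fun j' : Fin c => (j' : ℕ) < jn), H i' j' := by
      intro i' jn
      rw [← Finset.sum_congr rfl (fun j' _ => hfib i' j'),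
        Finset.sum_fiberwise_eq_sum_filter Finset.univ
          (Finset.univ.filter (fun j' : Fin c => (j' : ℕ) < jn)) g (fun t => Y i' t)]
      apply Finset.sum_congr _ (fun _ _ => rfl)
      ext l
      simp
    calc ∑ l ∈ Finset.univ.filter (fun l : Fin c' => (l : ℕ) < t + 1), Y ⟨i+1, hi⟩ l
        ≤ ∑ l ∈ Finset.univ.filter (fun l : Fin c' => ((g l : ℕ)) < (g (⟨t, ht⟩ : Fin c') : ℕ) + 1),
            Y ⟨i+1, hi⟩ l := by
          apply Finset.sum_le_sum_of_subset_of_nonneg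
          · intro l hl
            simp only [Finset.mem_filter, Finset.mem_univ, true_and] at hl ⊢
            have hle : l ≤ (⟨t, ht⟩ : Fin c') := by
              simp only [Fin.le_def, Fin.val_mk]; omega
            have h2 := hg hle
            rw [Fin.le_def] at h2
            omega
          · intro l _ _; exact hY0 _ _
      _ = ∑ j' ∈ Finset.univ.filter (fun j' : Fin c => (j' : ℕ) < (g (⟨t, ht⟩ : Fin c') : ℕ) + 1),
            H ⟨i+1, hi⟩ j' := key1 _ _
      _ ≤ ∑ j' ∈ Finset.univ.filter (fun j' : Fin c => (j' : ℕ) < (g (⟨t, ht⟩ : Fin c') : ℕ)),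
            H ⟨i, Nat.lt_of_succ_lt hi⟩ j' := hstair i (g (⟨t, ht⟩ : Fin c') : ℕ) hi (g (⟨t, ht⟩ : Fin c')).isLt
      _ = ∑ l ∈ Finset.univ.filter (fun l : Fin c' => ((g l : ℕ)) < (g (⟨t, ht⟩ : Fin c') : ℕ)),
            Y ⟨i, Nat.lt_of_succ_lt hi⟩ l := (key1 _ _).symm
      _ ≤ ∑ l ∈ Finset.univ.filter (fun l : Fin c' => (l : ℕ) < t), Y ⟨i, Nat.lt_of_succ_lt hi⟩ l := by
          apply Finset.sum_le_sum_of_subset_of_nonneg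
          · intro l hl
            simp only [Finset.mem_filter, Finset.mem_univ, true_and] at hl ⊢
            by_contra hcon
            have h1 : (⟨t, ht⟩ : Fin c') ≤ l := by
              simp only [Fin.le_def, Fin.val_mk]; omega
            have h2 := hg h1
            rw [Fin.le_def] at h2
            omega
          · intro l _ _; exact hY0 _ _

theorem multihistogram_columns_bounded {d k n : ℕ} (cdim : Fin k → ℕ)
    (M : ∀ ℓ : Fin k, Matrix (Fin d) (Fin (cdim ℓ)) ℤ)
    (A : Matrix (Fin d) (Fin n) ℤ)
    (P : Set ((Σ ℓ : Fin k, Fin (cdim ℓ)) → ℤ))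
    (B : (Fin d → ℤ) → Set ((Σ ℓ : Fin k, Fin (cdim ℓ)) → ℤ))
    (hP : ∀ x ∈ P, (∀ p, 0 ≤ x p) ∧
      (∀ i, ∑ p : Σ ℓ : Fin k, Fin (cdim ℓ), M p.1 i p.2 * x p = 0))
    (hB : ∀ a : Fin d → ℤ, (a = 0 ∨ ∃ j : Fin n, a = fun i => A i j) →
      (∀ x ∈ B a, (∀ p, 0 ≤ x p) ∧
        (∀ i, ∑ p : Σ ℓ : Fin k, Fin (cdim ℓ), M p.1 i p.2 * x p = a i)) ∧
      (∀ x : (Σ ℓ : Fin k, Fin (cdim ℓ)) → ℤ,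
        ((∀ p, 0 ≤ x p) ∧
          (∀ i, ∑ p : Σ ℓ : Fin k, Fin (cdim ℓ), M p.1 i p.2 * x p = a i)) ↔
        ∃ b ∈ B a, ∃ q ∈ AddSubmonoid.closure P, x = b + q))
    (hex : ∃ (c : ℕ) (H : ∀ ℓ : Fin k, Matrix (Fin (cdim ℓ)) (Fin c) ℤ),
      (∀ ℓ, ∃ s : ℕ, IsHistogram (H ℓ) s) ∧ IsZeroExt A (∑ ℓ, M ℓ * H ℓ)) :
    ∃ (c : ℕ) (H : ∀ ℓ : Fin k, Matrix (Fin (cdim ℓ)) (Fin c) ℤ),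
      (∀ ℓ, ∃ s : ℕ, IsHistogram (H ℓ) s) ∧ IsZeroExt A (∑ ℓ, M ℓ * H ℓ) ∧
      ∀ j : Fin c, (fun p : Σ ℓ : Fin k, Fin (cdim ℓ) => H p.1 p.2 j) ∈
        B 0 ∪ (⋃ j' : Fin n, B (fun i => A i j')) ∪ P := by
  classical
  obtain ⟨c, H, hHist, f, hfmono, hfagree, hfzero⟩ := hex
  set N := ∑ ℓ, M ℓ * H ℓ with hN
  -- sum over sigma type splits
  have hsig : ∀ (F : (Σ ℓ : Fin k, Fin (cdim ℓ)) → ℤ),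
      ∑ p : Σ ℓ : Fin k, Fin (cdim ℓ), F p = ∑ ℓ : Fin k, ∑ q : Fin (cdim ℓ), F ⟨ℓ, q⟩ := by
    intro F
    rw [← Finset.univ_sigma_univ, Finset.sum_sigma]
  -- the column formula for products
  have hcolprod : ∀ {c0 : ℕ} (G : ∀ ℓ : Fin k, Matrix (Fin (cdim ℓ)) (Fin c0) ℤ)
      (i : Fin d) (j : Fin c0),
      (∑ ℓ, M ℓ * G ℓ) i j = ∑ p : Σ ℓ : Fin k, Fin (cdim ℓ), M p.1 i p.2 * G p.1 p.2 j := by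
    intro c0 G i j
    rw [hsig]
    rw [Matrix.sum_apply]
    exact Finset.sum_congr rfl fun ℓ _ => Matrix.mul_apply
  -- column values of N are 0 or columns of A
  have haval : ∀ j : Fin c, ((fun i => N i j) = 0 ∨ ∃ j', (fun i => N i j) = fun i => A i j') := by
    intro j
    by_cases hj : ∃ j₀, f j₀ = j
    · obtain ⟨j₀, rfl⟩ := hj
      exact Or.inr ⟨j₀, funext fun i => hfagree i j₀⟩
    · exact Or.inl (funext fun i => hfzero i j (fun j₀ h => hj ⟨j₀, h⟩))
  -- decompose every column of the multihistogram
  have hdecomp : ∀ j : Fin c, ∃ b ∈ B (fun i => N i j),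
      ∃ Lj : List ((Σ ℓ : Fin k, Fin (cdim ℓ)) → ℤ), (∀ y ∈ Lj, y ∈ P) ∧
        (fun p : Σ ℓ : Fin k, Fin (cdim ℓ) => H p.1 p.2 j) = b + Lj.sum := by
    intro j
    have hxmem : (∀ p : Σ ℓ : Fin k, Fin (cdim ℓ), 0 ≤ H p.1 p.2 j) ∧
        (∀ i, ∑ p : Σ ℓ : Fin k, Fin (cdim ℓ), M p.1 i p.2 * H p.1 p.2 j = N i j) := by
      constructor
      · intro p
        exact ((hHist p.1).choose_spec).2.1 p.2 j
      · intro i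
        exact (hcolprod H i j).symm
    have := ((hB _ (haval j)).2 _).mp hxmem
    obtain ⟨b, hbB, q, hq, hx⟩ := this
    obtain ⟨Lj, hLP, hLs⟩ := AddSubmonoid.exists_list_of_mem_closure hq
    exact ⟨b, hbB, Lj, hLP, by rw [hLs]; exact hx⟩
  choose b hbB L hLP hxeq using hdecomp
  -- the block of columns replacing column j
  set blk : (j : Fin c) → Fin ((L j).length + 1) → ((Σ ℓ : Fin k, Fin (cdim ℓ)) → ℤ) :=
    fun j => Fin.cons (b j) ((L j).get) with hblk
  -- new column index type
  set T := Lex (Σ j : Fin c, Fin ((L j).length + 1)) with hT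
  set c' := Fintype.card T with hc'
  set e : Fin c' ≃o T := Fintype.orderIsoFinOfCardEq T rfl with he
  set Y : Fin c' → ((Σ ℓ : Fin k, Fin (cdim ℓ)) → ℤ) :=
    fun t => blk (ofLex (e t)).1 (ofLex (e t)).2 with hY
  set g : Fin c' → Fin c := fun t => (ofLex (e t)).1 with hg
  have hgmono : Monotone g := by
    intro t t' htt
    have h1 : e t ≤ e t' := e.monotone htt
    rcases Sigma.Lex.le_def.mp h1 with h2 | ⟨h2, _⟩
    · exact le_of_lt h2
    · exact le_of_eq h2
  -- block sums
  have hblksum : ∀ j : Fin c, ∑ i : Fin ((L j).length + 1), blk j i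
      = (fun p : Σ ℓ : Fin k, Fin (cdim ℓ) => H p.1 p.2 j) := by
    intro j
    rw [hblk]
    rw [Fin.sum_cons]
    rw [hxeq j]
    congr 1
    simpa [List.get_eq_getElem] using Fin.sum_univ_get (L j)
  -- fiber sums
  have hfibv : ∀ j : Fin c, ∑ t ∈ Finset.univ.filter (fun t => g t = j), Y t
      = (fun p : Σ ℓ : Fin k, Fin (cdim ℓ) => H p.1 p.2 j) := by
    intro j
    rw [← hblksum j]
    have step1 : ∑ t ∈ Finset.univ.filter (fun t => g t = j), Y t
        = ∑ τ ∈ Finset.univ.filter (fun τ : T => (ofLex τ).1 = j),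
            blk (ofLex τ).1 (ofLex τ).2 := by
      apply Finset.sum_equiv e.toEquiv
      · intro t
        simp only [Finset.mem_filter, Finset.mem_univ, true_and]
        exact Iff.rfl
      · intro t _; rfl
    rw [step1]
    have step2 : ∑ τ ∈ Finset.univ.filter (fun τ : T => (ofLex τ).1 = j),
            blk (ofLex τ).1 (ofLex τ).2
        = ∑ x ∈ Finset.univ.filter (fun x : Σ j' : Fin c, Fin ((L j').length + 1) => x.1 = j),
            blk x.1 x.2 := by
      apply Finset.sum_equiv (toLex : (Σ j' : Fin c, Fin ((L j').length + 1)) ≃ T).symm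
      · intro τ
        simp only [Finset.mem_filter, Finset.mem_univ, true_and]
        exact Iff.rfl
      · intro τ _; rfl
    rw [step2]
    have step3 : Finset.univ.filter (fun x : Σ j' : Fin c, Fin ((L j').length + 1) => x.1 = j)
        = ({j} : Finset (Fin c)).sigma (fun j' => Finset.univ) := by
      ext x
      simp [Finset.mem_sigma, eq_comm]
    rw [step3, Finset.sum_sigma, Finset.sum_singleton]
  -- nonnegativity and product values for blocks
  have hbprop : ∀ j : Fin c, (∀ p, 0 ≤ b j p) ∧
      (∀ i, ∑ p : Σ ℓ : Fin k, Fin (cdim ℓ), M p.1 i p.2 * b j p = N i j) :=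
    fun j => (hB _ (haval j)).1 (b j) (hbB j)
  have hYcases : ∀ t : Fin c', Y t = b (g t) ∨ Y t ∈ P := by
    intro t
    obtain ⟨j, i, hji⟩ : ∃ j i, ofLex (e t) = ⟨j, i⟩ :=
      ⟨(ofLex (e t)).1, (ofLex (e t)).2, rfl⟩
    have hYt : Y t = blk j i := by simp only [hY]; rw [hji]
    have hgt : g t = j := by simp only [hg]; rw [hji]
    induction i using Fin.cases with
    | zero =>
      left
      rw [hYt, hgt]
      simp only [hblk]
      exact Fin.cons_zero _ _
    | succ i' =>
      right
      rw [hYt]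
      have hcs : blk j i'.succ = (L j).get i' := by
        simp only [hblk]
        exact Fin.cons_succ _ _ _
      rw [hcs]
      exact hLP j _ (List.get_mem _ _)
  have hYnn : ∀ (t : Fin c') (p : Σ ℓ : Fin k, Fin (cdim ℓ)), 0 ≤ Y t p := by
    intro t p
    rcases hYcases t with h | h
    · rw [h]; exact (hbprop (g t)).1 p
    · exact (hP _ h).1 p
  -- the new multihistogram
  set H' : ∀ ℓ : Fin k, Matrix (Fin (cdim ℓ)) (Fin c') ℤ := fun ℓ q t => Y t ⟨ℓ, q⟩ with hH'
  have hNcol : ∀ (i : Fin d) (t : Fin c'),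
      (∑ ℓ, M ℓ * H' ℓ) i t = ∑ p : Σ ℓ : Fin k, Fin (cdim ℓ), M p.1 i p.2 * Y t p :=
    fun i t => hcolprod H' i t
  refine ⟨c', H', ?_, ?_, ?_⟩
  · -- histograms
    intro ℓ
    obtain ⟨s, hs⟩ := hHist ℓ
    refine ⟨s, histo_transfer hs g hgmono _ (fun q t => hYnn t ⟨ℓ, q⟩) ?_⟩
    intro q j
    have := congrFun (hfibv j) ⟨ℓ, q⟩
    rw [Finset.sum_apply] at this
    exact this
  · -- zero extension
    refine ⟨fun j₀ => e.symm (toLex ⟨f j₀, 0⟩), ?_, ?_, ?_⟩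
    · intro j₀ j₁ hlt
      apply e.symm.strictMono
      exact Sigma.Lex.lt_def.mpr (Or.inl (hfmono hlt))
    · intro i j₀
      rw [hNcol]
      have hYval : Y (e.symm (toLex ⟨f j₀, 0⟩)) = b (f j₀) := by
        have h1 : ofLex (e (e.symm (toLex ⟨f j₀, (0 : Fin ((L (f j₀)).length + 1))⟩)))
            = ⟨f j₀, (0 : Fin ((L (f j₀)).length + 1))⟩ := by
          rw [e.apply_symm_apply]
          rfl
        simp only [hY]
        rw [h1]
        simp only [hblk]
        exact Fin.cons_zero _ _
      rw [hYval, (hbprop (f j₀)).2 i]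
      exact hfagree i j₀
    · intro i t hft
      rw [hNcol]
      obtain ⟨j, i', hji⟩ : ∃ j i', ofLex (e t) = ⟨j, i'⟩ :=
        ⟨(ofLex (e t)).1, (ofLex (e t)).2, rfl⟩
      have hYt : Y t = blk j i' := by simp only [hY]; rw [hji]
      induction i' using Fin.cases with
      | zero =>
        have ht : t = e.symm (toLex ⟨j, (0 : Fin ((L j).length + 1))⟩) := by
          apply e.injective
          rw [e.apply_symm_apply]
          have : e t = toLex (ofLex (e t)) := rfl
          rw [this, hji]
        have hjnr : ∀ j₀, f j₀ ≠ j := by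
          intro j₀ hf
          apply hft j₀
          show e.symm (toLex ⟨f j₀, (0 : Fin ((L (f j₀)).length + 1))⟩) = t
          rw [ht]
          exact congrArg (fun jj : Fin c =>
            e.symm (toLex ⟨jj, (0 : Fin ((L jj).length + 1))⟩)) hf
        have hYb : Y t = b j := by
          rw [hYt]
          simp only [hblk]
          exact Fin.cons_zero _ _
        rw [hYb, (hbprop j).2 i]
        exact hfzero i j hjnr
      | succ i'' =>
        have hYP : Y t ∈ P := by
          rw [hYt]
          have hcs : blk j i''.succ = (L j).get i'' := by
            simp only [hblk]
            exact Fin.cons_succ _ _ _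
          rw [hcs]
          exact hLP j _ (List.get_mem _ _)
        exact (hP _ hYP).2 i
  · -- column membership
    intro t
    show Y t ∈ _
    rcases hYcases t with h | h
    · rw [h]
      rcases haval (g t) with h0 | ⟨j', hj'⟩
      · left; left; rw [← h0]; exact hbB (g t)
      · left; right
        exact Set.mem_iUnion.mpr ⟨j', by rw [← hj']; exact hbB (g t)⟩
    · right; exact h
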